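/- For every y ∈ ℝ, the supremum over x ≥ 0 of x·y − f_softχ²(x) is attained at a unique point, namely at x* = exp(y) if y < 0 and at x* = y + 1 if y ≥ 0 (i.e., the inverse of the derivative of f_softχ² is given by (f_softχ²')⁻¹(y) = exp(y) for y < 0 and (f_softχ²')⁻¹(y) = y + 1 for y ≥ 0). -/
import Mathlib


/-- The softened chi-square function (its values on `[0,∞)` are the ones that matter):
`f(0) = 1`, `f(x) = x log x − x + 1` for `0 < x < 1`, and `f(x) = (x−1)²/2` for `x ≥ 1`.
(Note `0 * log 0 − 0 + 1 = 1` in Lean's convention, so the first clause covers `x = 0` too.) -/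
noncomputable def fsoftChiSq (x : ℝ) : ℝ :=
  if x < 1 then x * Real.log x - x + 1 else (x - 1) ^ 2 / 2

lemma fsoft_key (y z : ℝ) (hz : 0 ≤ z)
    (hne : z ≠ (if y < 0 then Real.exp y else y + 1)) :
    z * y - fsoftChiSq z < (if y < 0 then Real.exp y else y + 1) * y
      - fsoftChiSq (if y < 0 then Real.exp y else y + 1) := by
  by_cases hy : y < 0
  · rw [if_pos hy] at hne ⊢
    have hx1 : Real.exp y < 1 := Real.exp_lt_one_iff.2 hy
    have hfx : fsoftChiSq (Real.exp y) = Real.exp y * y - Real.exp y + 1 := by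
      rw [fsoftChiSq, if_pos hx1, Real.log_exp]
    rw [hfx]
    by_cases hz1 : z < 1
    · rw [fsoftChiSq, if_pos hz1]
      rcases eq_or_lt_of_le hz with h0 | h0
      · simp [← h0, Real.log_zero]
        nlinarith [Real.exp_pos y]
      · have hzexp : z = Real.exp (Real.log z) := (Real.exp_log h0).symm
        set t := Real.log z with ht
        have hty : y - t ≠ 0 := by
          intro h
          apply hne
          rw [hzexp, show t = y by linarith [sub_eq_zero.1 h]]
        have hlt : (y - t) + 1 < Real.exp (y - t) := Real.add_one_lt_exp hty
        have hmul : Real.exp t * ((y - t) + 1) < Real.exp y := by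
          have := (mul_lt_mul_iff_right₀ (Real.exp_pos t)).2 hlt
          rwa [← Real.exp_add, add_sub_cancel] at this
        rw [hzexp]
        nlinarith
    · rw [fsoftChiSq, if_neg hz1]
      push_neg at hz1
      have h1 : y + 1 < Real.exp y := Real.add_one_lt_exp (ne_of_lt hy)
      have h2 : z * y ≤ y := by nlinarith
      nlinarith [sq_nonneg (z - 1)]
  · push_neg at hy
    rw [if_neg (not_lt.2 hy)] at hne ⊢
    have hfx : fsoftChiSq (y + 1) = y ^ 2 / 2 := by
      rw [fsoftChiSq, if_neg (by linarith)]
      ring_nf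
    rw [hfx]
    by_cases hz1 : z < 1
    · rw [fsoftChiSq, if_pos hz1]
      rcases eq_or_lt_of_le hz with h0 | h0
      · simp [← h0, Real.log_zero]
        nlinarith
      · have hinv : Real.log (1 / z) < 1 / z - 1 := by
          apply Real.log_lt_sub_one_of_pos (by positivity)
          intro h
          rw [div_eq_one_iff_eq (ne_of_gt h0)] at h
          exact absurd h (by linarith)
        rw [one_div, Real.log_inv] at hinv
        have hzz : z * z⁻¹ = 1 := mul_inv_cancel₀ (ne_of_gt h0)
        have h2 : z - 1 < z * Real.log z := by nlinarith
        nlinarith [mul_nonneg hy (by linarith : (0:ℝ) ≤ 1 - z), sq_nonneg y]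
    · rw [fsoftChiSq, if_neg hz1]
      have : z ≠ y + 1 := hne
      have hp : 0 < (z - 1 - y) ^ 2 := by
        apply sq_pos_of_ne_zero
        intro h; apply this; linarith
      nlinarith

theorem stmt12 (y : ℝ) (xstar : ℝ) (hxstar : xstar = if y < 0 then Real.exp y else y + 1) :
    (0 ≤ xstar) ∧
      (∀ z : ℝ, 0 ≤ z → z * y - fsoftChiSq z ≤ xstar * y - fsoftChiSq xstar) ∧
      (∀ x : ℝ, 0 ≤ x →
        (∀ z : ℝ, 0 ≤ z → z * y - fsoftChiSq z ≤ x * y - fsoftChiSq x) → x = xstar) := by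
  have hx0 : 0 ≤ xstar := by
    rw [hxstar]
    split
    · exact (Real.exp_pos y).le
    · push_neg at *; linarith
  refine ⟨hx0, ?_, ?_⟩
  · intro z hz
    by_cases h : z = xstar
    · rw [h]
    · exact le_of_lt (by rw [hxstar] at h ⊢; exact fsoft_key y z hz h)
  · intro x hx hmax
    by_contra h
    have h1 := hmax xstar hx0
    have h2 : x * y - fsoftChiSq x < xstar * y - fsoftChiSq xstar := by
      rw [hxstar] at h ⊢; exact fsoft_key y x hx h
    linarith
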